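/- (β-Lagrange identity on (a,b).) Let a, b ∈ I with a ≤ s0 ≤ b, let r : I → ℝ be continuous on [a,b], and let y, z : I → ℂ belong to L²_β(a,b), be continuous and differentiable at s0, with D_β y and D_β z differentiable at s0 and D_β y, D_β z, D_{β^{-1}}D_β y, D_{β^{-1}}D_β z bounded on {β^k(a), β^k(b) : k ∈ ℕ₀} ∪ {s0}. Then ∫_{a}^{b} [ (ℓ_β y)(t)·conj(z(t)) − y(t)·conj((ℓ_β z)(t)) ] d_β t = [y, conj z](b) − [y, conj z](a). -/

import Mathlib

open Function Set ComplexConjugate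

/-- The β-derivative `D_β f` of `f : ℝ → ℂ`:
`(f (β t) - f t) / (β t - t)` for `t ≠ s0`, and `f' s0` at `t = s0`. -/
noncomputable def Dq (β : ℝ → ℝ) (s0 : ℝ) (f : ℝ → ℂ) (t : ℝ) : ℂ :=
  if t = s0 then deriv f s0 else (f (β t) - f t) / ((β t : ℂ) - (t : ℂ))

/-- The β-integral `∫_{s0}^{x} f d_β = ∑_{k} (β^k x - β^{k+1} x) f (β^k x)` (complex-valued). -/
noncomputable def betaInt (β : ℝ → ℝ) (x : ℝ) (f : ℝ → ℂ) : ℂ :=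
  ∑' k : ℕ, ((β^[k] x - β^[k + 1] x : ℝ) : ℂ) * f (β^[k] x)

/-- The β-integral `∫_{s0}^{x} f d_β` for a real-valued integrand. -/
noncomputable def betaIntR (β : ℝ → ℝ) (x : ℝ) (f : ℝ → ℝ) : ℝ :=
  ∑' k : ℕ, (β^[k] x - β^[k + 1] x) * f (β^[k] x)

/-- `∫_a^b f d_β := ∫_{s0}^b f d_β - ∫_{s0}^a f d_β`. -/
noncomputable def betaIntAB (β : ℝ → ℝ) (a b : ℝ) (f : ℝ → ℂ) : ℂ :=
  betaInt β b f - betaInt β a f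

/-- `∫_a^b f d_β` for a real-valued integrand. -/
noncomputable def betaIntRAB (β : ℝ → ℝ) (a b : ℝ) (f : ℝ → ℝ) : ℝ :=
  betaIntR β b f - betaIntR β a f

/-- `D_β β⁻¹`, viewed as a complex-valued function. -/
noncomputable def DbinvC (β βinv : ℝ → ℝ) (s0 : ℝ) : ℝ → ℂ :=
  Dq β s0 fun u => (βinv u : ℂ)

/-- The β-Sturm–Liouville operator
`ℓ_β y (t) = -(D_β β⁻¹)(t) · (D_{β⁻¹} (D_β y))(t) + r t · y t`. -/
noncomputable def ellBeta (β βinv : ℝ → ℝ) (s0 : ℝ) (r : ℝ → ℝ) (y : ℝ → ℂ) (t : ℝ) : ℂ :=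
  -(DbinvC β βinv s0 t) * Dq βinv s0 (Dq β s0 y) t + (r t : ℂ) * y t

/-- The β-Wronskian `[y,z](t) = y t · (D_{β⁻¹} z) t - z t · (D_{β⁻¹} y) t`. -/
noncomputable def wronk (βinv : ℝ → ℝ) (s0 : ℝ) (y z : ℝ → ℂ) (t : ℝ) : ℂ :=
  y t * Dq βinv s0 z t - z t * Dq βinv s0 y t

/-- The β-exponential `e_{p,β}(t) = 1 / ∏_k (1 - p(β^k t)(β^k t - β^{k+1} t))`. -/
noncomputable def ebeta (β : ℝ → ℝ) (p : ℝ → ℂ) (t : ℝ) : ℂ :=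
  1 / ∏' k : ℕ, (1 - p (β^[k] t) * ((β^[k] t - β^[k + 1] t : ℝ) : ℂ))

/-- The β-exponential `E_{p,β}(t) = ∏_k (1 + p(β^k t)(β^k t - β^{k+1} t))`. -/
noncomputable def Ebeta (β : ℝ → ℝ) (p : ℝ → ℂ) (t : ℝ) : ℂ :=
  ∏' k : ℕ, (1 + p (β^[k] t) * ((β^[k] t - β^[k + 1] t : ℝ) : ℂ))

/-- `sin_{p,β}(t) = (e_{ip,β}(t) - e_{-ip,β}(t)) / (2i)`. -/
noncomputable def sinBeta (β : ℝ → ℝ) (p : ℝ → ℂ) (t : ℝ) : ℂ :=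
  (ebeta β (fun s => Complex.I * p s) t - ebeta β (fun s => -(Complex.I * p s)) t) /
    (2 * Complex.I)

/-- `cos_{p,β}(t) = (e_{ip,β}(t) + e_{-ip,β}(t)) / 2`. -/
noncomputable def cosBeta (β : ℝ → ℝ) (p : ℝ → ℂ) (t : ℝ) : ℂ :=
  (ebeta β (fun s => Complex.I * p s) t + ebeta β (fun s => -(Complex.I * p s)) t) / 2


section LagrangeAux

open Filter Topology

private lemma lagrange_orbit_upper
    (I : Set ℝ) (hIconn : I.OrdConnected) (β : ℝ → ℝ) (s0 : ℝ)
    (hmono : StrictMonoOn β I) (hcont : ContinuousOn β I)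
    (hs0I : s0 ∈ I) (hfix : β s0 = s0)
    (hsign : ∀ t ∈ I, (t - s0) * (β t - t) ≤ 0)
    (huniq : ∀ t ∈ I, (t - s0) * (β t - t) = 0 → t = s0)
    (x : ℝ) (hx : x ∈ I) (hxs : s0 ≤ x) :
    (∀ k : ℕ, β^[k] x ∈ I) ∧
      Tendsto (fun k : ℕ => β^[k] x) atTop (𝓝 s0) ∧
      Summable (fun k : ℕ => |β^[k] x - β^[k + 1] x|) := by
  have hsub : Set.Icc s0 x ⊆ I := hIconn.out hs0I hx
  have hstep : ∀ t ∈ Set.Icc s0 x, β t ∈ Set.Icc s0 t := by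
    intro t ht
    have htI : t ∈ I := hsub ht
    rcases eq_or_lt_of_le ht.1 with h | h
    · rw [← h, hfix]; exact ⟨le_refl _, le_refl _⟩
    · constructor
      · exact le_of_lt (hfix ▸ hmono hs0I htI h)
      · nlinarith [hsign t htI]
  have hmem : ∀ k : ℕ, β^[k] x ∈ Set.Icc s0 x := by
    intro k; induction k with
    | zero => exact ⟨hxs, le_refl x⟩
    | succ n ih =>
      rw [Function.iterate_succ_apply']
      exact ⟨(hstep _ ih).1, (hstep _ ih).2.trans ih.2⟩
  have hI : ∀ k, β^[k] x ∈ I := fun k => hsub (hmem k)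
  have hanti : Antitone (fun k : ℕ => β^[k] x) := antitone_nat_of_succ_le (fun n => by
    rw [Function.iterate_succ_apply']; exact (hstep _ (hmem n)).2)
  have hbdd : BddBelow (Set.range fun k : ℕ => β^[k] x) :=
    ⟨s0, by rintro _ ⟨k, rfl⟩; exact (hmem k).1⟩
  have htend0 : Tendsto (fun k : ℕ => β^[k] x) atTop (𝓝 (⨅ k : ℕ, β^[k] x)) :=
    tendsto_atTop_ciInf hanti hbdd
  set c := ⨅ k : ℕ, β^[k] x with hc
  have hcs0 : s0 ≤ c := le_ciInf fun k => (hmem k).1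
  have hcx : c ≤ x := by
    have := ciInf_le hbdd 0
    simpa using this
  have hcI : c ∈ I := hsub ⟨hcs0, hcx⟩
  have h1 : Tendsto (fun k : ℕ => β^[k + 1] x) atTop (𝓝 c) :=
    htend0.comp (tendsto_add_atTop_nat 1)
  have h2 : Tendsto (fun k : ℕ => β (β^[k] x)) atTop (𝓝 (β c)) := by
    have hcw : ContinuousWithinAt β I c := hcont c hcI
    exact hcw.tendsto.comp (tendsto_nhdsWithin_of_tendsto_nhds_of_eventually_within _ htend0
      (Filter.Eventually.of_forall fun k => hI k))
  have hβc : β c = c := by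
    refine tendsto_nhds_unique ?_ h1
    exact h2.congr (fun k => (Function.iterate_succ_apply' β k x).symm)
  have hc0 : c = s0 := huniq c hcI (by rw [hβc]; ring)
  refine ⟨hI, hc0 ▸ htend0, ?_⟩
  refine summable_of_sum_range_le (c := x - s0) (fun n => abs_nonneg _) ?_
  intro n
  have habs : ∀ i : ℕ, |β^[i] x - β^[i + 1] x| = β^[i] x - β^[i + 1] x := fun i =>
    abs_of_nonneg (sub_nonneg.mpr (hanti (Nat.le_succ i)))
  rw [Finset.sum_congr rfl (fun i _ => habs i),
    Finset.sum_range_sub' (fun i => β^[i] x) n]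
  have h3 := (hmem n).1
  simp only [Function.iterate_zero_apply]
  linarith

private lemma lagrange_orbit_lower
    (I : Set ℝ) (hIconn : I.OrdConnected) (β : ℝ → ℝ) (s0 : ℝ)
    (hmono : StrictMonoOn β I) (hcont : ContinuousOn β I)
    (hs0I : s0 ∈ I) (hfix : β s0 = s0)
    (hsign : ∀ t ∈ I, (t - s0) * (β t - t) ≤ 0)
    (huniq : ∀ t ∈ I, (t - s0) * (β t - t) = 0 → t = s0)
    (x : ℝ) (hx : x ∈ I) (hxs : x ≤ s0) :
    (∀ k : ℕ, β^[k] x ∈ I) ∧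
      Tendsto (fun k : ℕ => β^[k] x) atTop (𝓝 s0) ∧
      Summable (fun k : ℕ => |β^[k] x - β^[k + 1] x|) := by
  have hsub : Set.Icc x s0 ⊆ I := hIconn.out hx hs0I
  have hstep : ∀ t ∈ Set.Icc x s0, β t ∈ Set.Icc t s0 := by
    intro t ht
    have htI : t ∈ I := hsub ht
    rcases eq_or_lt_of_le ht.2 with h | h
    · rw [h, hfix]; exact ⟨le_refl _, le_refl _⟩
    · constructor
      · nlinarith [hsign t htI]
      · exact le_of_lt (hfix ▸ hmono htI hs0I h)
  have hmem : ∀ k : ℕ, β^[k] x ∈ Set.Icc x s0 := by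
    intro k; induction k with
    | zero => exact ⟨le_refl x, hxs⟩
    | succ n ih =>
      rw [Function.iterate_succ_apply']
      exact ⟨ih.1.trans (hstep _ ih).1, (hstep _ ih).2⟩
  have hI : ∀ k, β^[k] x ∈ I := fun k => hsub (hmem k)
  have hmono' : Monotone (fun k : ℕ => β^[k] x) := monotone_nat_of_le_succ (fun n => by
    rw [Function.iterate_succ_apply']; exact (hstep _ (hmem n)).1)
  have hbdd : BddAbove (Set.range fun k : ℕ => β^[k] x) :=
    ⟨s0, by rintro _ ⟨k, rfl⟩; exact (hmem k).2⟩
  have htend0 : Tendsto (fun k : ℕ => β^[k] x) atTop (𝓝 (⨆ k : ℕ, β^[k] x)) :=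
    tendsto_atTop_ciSup hmono' hbdd
  set c := ⨆ k : ℕ, β^[k] x with hc
  have hcs0 : c ≤ s0 := ciSup_le fun k => (hmem k).2
  have hcx : x ≤ c := by
    have := le_ciSup hbdd 0
    simpa using this
  have hcI : c ∈ I := hsub ⟨hcx, hcs0⟩
  have h1 : Tendsto (fun k : ℕ => β^[k + 1] x) atTop (𝓝 c) :=
    htend0.comp (tendsto_add_atTop_nat 1)
  have h2 : Tendsto (fun k : ℕ => β (β^[k] x)) atTop (𝓝 (β c)) := by
    have hcw : ContinuousWithinAt β I c := hcont c hcI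
    exact hcw.tendsto.comp (tendsto_nhdsWithin_of_tendsto_nhds_of_eventually_within _ htend0
      (Filter.Eventually.of_forall fun k => hI k))
  have hβc : β c = c := by
    refine tendsto_nhds_unique ?_ h1
    exact h2.congr (fun k => (Function.iterate_succ_apply' β k x).symm)
  have hc0 : c = s0 := huniq c hcI (by rw [hβc]; ring)
  refine ⟨hI, hc0 ▸ htend0, ?_⟩
  refine summable_of_sum_range_le (c := s0 - x) (fun n => abs_nonneg _) ?_
  intro n
  have habs : ∀ i : ℕ, |β^[i] x - β^[i + 1] x| = β^[i + 1] x - β^[i] x := fun i => by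
    rw [abs_sub_comm]
    exact abs_of_nonneg (sub_nonneg.mpr (hmono' (Nat.le_succ i)))
  rw [Finset.sum_congr rfl (fun i _ => habs i)]
  rw [Finset.sum_range_sub (fun i => β^[i] x) n]
  have h3 := (hmem n).2
  simp only [Function.iterate_zero_apply]
  linarith

private lemma lagrange_core
    (I : Set ℝ) (β βinv : ℝ → ℝ) (s0 : ℝ)
    (hbij : Set.BijOn β I I) (hinv : Set.InvOn βinv β I I)
    (hs0I : s0 ∈ I) (hfix : β s0 = s0)
    (huniq : ∀ t ∈ I, (t - s0) * (β t - t) = 0 → t = s0)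
    (r : ℝ → ℝ) (y z : ℝ → ℂ)
    (hyc : ContinuousAt y s0) (hzc : ContinuousAt z s0)
    (hDyc : ContinuousAt (Dq β s0 y) s0) (hDzc : ContinuousAt (Dq β s0 z) s0)
    (hderivz : deriv (fun t => (conj (z t) : ℂ)) s0 = conj (deriv z s0))
    (x : ℝ) (horb : ∀ k : ℕ, β^[k] x ∈ I)
    (htend : Tendsto (fun k : ℕ => β^[k] x) atTop (𝓝 s0))
    (hsum : Summable (fun k : ℕ => |β^[k] x - β^[k + 1] x|))
    (C1 C2 Cy Cz : ℝ)
    (hC1 : ∀ k : ℕ, ‖Dq βinv s0 (Dq β s0 y) (β^[k] x)‖ ≤ C1)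
    (hC2 : ∀ k : ℕ, ‖Dq βinv s0 (Dq β s0 z) (β^[k] x)‖ ≤ C2)
    (hCy : ∀ k : ℕ, ‖y (β^[k] x)‖ ≤ Cy)
    (hCz : ∀ k : ℕ, ‖z (β^[k] x)‖ ≤ Cz) :
    betaInt β x (fun t =>
        ellBeta β βinv s0 r y t * conj (z t) - y t * conj (ellBeta β βinv s0 r z t)) =
      wronk βinv s0 y (fun t => conj (z t)) x -
        wronk βinv s0 y (fun t => conj (z t)) s0 := by
  by_cases hx : x = s0
  · subst hx
    simp [betaInt, Function.iterate_fixed hfix, sub_self]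
  -- notation
  have hli : ∀ p ∈ I, βinv (β p) = p := fun p hp => hinv.1 hp
  have hri : ∀ p ∈ I, β (βinv p) = p := fun p hp => hinv.2 hp
  have hne : ∀ k : ℕ, β^[k] x ≠ s0 := by
    have key : ∀ k : ℕ, β^[k] x = s0 → x = s0 := by
      intro k; induction k with
      | zero => simp
      | succ n ih =>
        intro h
        rw [Function.iterate_succ_apply'] at h
        exact ih (hbij.injOn (horb n) hs0I (by rw [h, hfix]))
    exact fun k h => hx (key k h)
  have hpt : ∀ p, p ∈ I → p ≠ s0 →
      βinv p ∈ I ∧ β (βinv p) = p ∧ βinv p ≠ s0 ∧ βinv p ≠ p ∧ β p ≠ p := by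
    intro p hp hps
    obtain ⟨q, hq, hqe⟩ := hbij.surjOn hp
    have hinvp : βinv p ∈ I := by rw [← hqe, hli q hq]; exact hq
    have hrip : β (βinv p) = p := hri p hp
    have hβp : β p ≠ p := fun h => hps (huniq p hp (by rw [h]; ring))
    have h3 : βinv p ≠ s0 := fun h => hps (by rw [← hrip, h, hfix])
    have h4 : βinv p ≠ p := fun h => hβp (by nth_rewrite 1 [← h]; exact hrip)
    exact ⟨hinvp, hrip, h3, h4, hβp⟩
  have hDqe : ∀ (g : ℝ → ℝ) (f : ℝ → ℂ) (p : ℝ), p ≠ s0 →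
      Dq g s0 f p = (f (g p) - f p) / ((g p : ℂ) - (p : ℂ)) := by
    intro g f p hp
    simp [Dq, hp]
  -- the wronskian as a function
  set W : ℝ → ℂ := wronk βinv s0 y (fun t => conj (z t)) with hW
  -- per-term identity
  have hterm : ∀ k : ℕ, ((β^[k] x - β^[k + 1] x : ℝ) : ℂ) *
      (ellBeta β βinv s0 r y (β^[k] x) * conj (z (β^[k] x)) -
        y (β^[k] x) * conj (ellBeta β βinv s0 r z (β^[k] x))) =
      W (β^[k] x) - W (β^[k + 1] x) := by
    intro k
    set t0 := β^[k] x with ht0d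
    set t1 := β^[k + 1] x with ht1d
    have ht0I : t0 ∈ I := horb k
    have ht1I : t1 ∈ I := horb (k + 1)
    have hbt : β t0 = t1 := (Function.iterate_succ_apply' β k x).symm
    have ht0s : t0 ≠ s0 := hne k
    have ht1s : t1 ≠ s0 := hne (k + 1)
    obtain ⟨hwI, hβw, hws, hwt, hβt⟩ := hpt t0 ht0I ht0s
    set w := βinv t0 with hwd
    have hinvt1 : βinv t1 = t0 := by rw [← hbt, hli t0 ht0I]
    have h10 : t1 ≠ t0 := by rw [← hbt]; exact hβt
    have hne10 : (t1 : ℂ) ≠ (t0 : ℂ) := by exact_mod_cast h10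
    have hnew0 : (w : ℂ) ≠ (t0 : ℂ) := by exact_mod_cast hwt
    have c10 : (t1 : ℂ) - t0 ≠ 0 := sub_ne_zero.mpr hne10
    have cw0 : (w : ℂ) - t0 ≠ 0 := sub_ne_zero.mpr hnew0
    have c01 : (t0 : ℂ) - t1 ≠ 0 := sub_ne_zero.mpr hne10.symm
    have c0w : (t0 : ℂ) - w ≠ 0 := sub_ne_zero.mpr hnew0.symm
    have eDb : DbinvC β βinv s0 t0 = ((t0 : ℂ) - (w : ℂ)) / ((t1 : ℂ) - (t0 : ℂ)) := by
      rw [DbinvC, hDqe β _ t0 ht0s, hbt, hinvt1]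
    have eDy : Dq β s0 y t0 = (y t1 - y t0) / ((t1 : ℂ) - t0) := by
      rw [hDqe β y t0 ht0s, hbt]
    have eDz : Dq β s0 z t0 = (z t1 - z t0) / ((t1 : ℂ) - t0) := by
      rw [hDqe β z t0 ht0s, hbt]
    have eDyw : Dq β s0 y w = (y t0 - y w) / ((t0 : ℂ) - w) := by
      rw [hDqe β y w hws, hβw]
    have eDzw : Dq β s0 z w = (z t0 - z w) / ((t0 : ℂ) - w) := by
      rw [hDqe β z w hws, hβw]
    have eDDy : Dq βinv s0 (Dq β s0 y) t0 =
        ((y t0 - y w) / ((t0 : ℂ) - w) - (y t1 - y t0) / ((t1 : ℂ) - t0)) / ((w : ℂ) - t0) := by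
      rw [hDqe βinv _ t0 ht0s, ← hwd, eDyw, eDy]
    have eDDz : Dq βinv s0 (Dq β s0 z) t0 =
        ((z t0 - z w) / ((t0 : ℂ) - w) - (z t1 - z t0) / ((t1 : ℂ) - t0)) / ((w : ℂ) - t0) := by
      rw [hDqe βinv _ t0 ht0s, ← hwd, eDzw, eDz]
    have eWt0 : W t0 =
        y t0 * ((conj (z w) - conj (z t0)) / ((w : ℂ) - t0)) -
          conj (z t0) * ((y w - y t0) / ((w : ℂ) - t0)) := by
      rw [hW, wronk, hDqe βinv _ t0 ht0s, hDqe βinv y t0 ht0s, ← hwd]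
    have eWt1 : W t1 =
        y t1 * ((conj (z t0) - conj (z t1)) / ((t0 : ℂ) - t1)) -
          conj (z t1) * ((y t0 - y t1) / ((t0 : ℂ) - t1)) := by
      rw [hW, wronk, hDqe βinv _ t1 ht1s, hDqe βinv y t1 ht1s, hinvt1]
    rw [ellBeta, ellBeta, eDb, eDDy, eDDz, eWt0, eWt1]
    simp only [map_add, map_mul, map_neg, map_sub, map_div₀, Complex.conj_ofReal]
    push_cast
    field_simp
    ring
  -- norm bound on shifted terms
  have hCy0 : 0 ≤ Cy := (norm_nonneg _).trans (hCy 0)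
  have hCz0 : 0 ≤ Cz := (norm_nonneg _).trans (hCz 0)
  have hC10 : 0 ≤ C1 := (norm_nonneg _).trans (hC1 0)
  have hC20 : 0 ≤ C2 := (norm_nonneg _).trans (hC2 0)
  have hnormconj : ∀ w : ℂ, ‖(starRingEnd ℂ) w‖ = ‖w‖ := fun w => by simp
  have hM : ∀ k : ℕ, ‖((β^[k + 1] x - β^[k + 1 + 1] x : ℝ) : ℂ) *
      (ellBeta β βinv s0 r y (β^[k + 1] x) * conj (z (β^[k + 1] x)) -
        y (β^[k + 1] x) * conj (ellBeta β βinv s0 r z (β^[k + 1] x)))‖ ≤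
      (Cy * C2 + C1 * Cz) * |β^[k] x - β^[k + 1] x| := by
    intro k
    set t0 := β^[k] x with ht0d
    set t1 := β^[k + 1] x with ht1d
    set t2 := β^[k + 1 + 1] x with ht2d
    have ht0I : t0 ∈ I := horb k
    have ht1I : t1 ∈ I := horb (k + 1)
    have hbt : β t0 = t1 := (Function.iterate_succ_apply' β k x).symm
    have hbt1 : β t1 = t2 := (Function.iterate_succ_apply' β (k + 1) x).symm
    have ht1s : t1 ≠ s0 := hne (k + 1)
    obtain ⟨_, _, _, _, hβt1⟩ := hpt t1 ht1I ht1s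
    have hinvt1 : βinv t1 = t0 := by rw [← hbt, hli t0 ht0I]
    have h21 : t2 ≠ t1 := by rw [← hbt1]; exact hβt1
    have hne21 : (t2 : ℂ) ≠ (t1 : ℂ) := by exact_mod_cast h21
    have c21 : (t2 : ℂ) - t1 ≠ 0 := sub_ne_zero.mpr hne21
    have hinvt2 : βinv t2 = t1 := by rw [← hbt1, hli t1 ht1I]
    have eDb : DbinvC β βinv s0 t1 = ((t1 : ℂ) - (t0 : ℂ)) / ((t2 : ℂ) - (t1 : ℂ)) := by
      rw [DbinvC, hDqe β _ t1 ht1s, hbt1, hinvt2, hinvt1]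
    have key : ((t1 - t2 : ℝ) : ℂ) *
        (ellBeta β βinv s0 r y t1 * conj (z t1) - y t1 * conj (ellBeta β βinv s0 r z t1)) =
        ((t0 : ℂ) - (t1 : ℂ)) *
          (y t1 * conj (Dq βinv s0 (Dq β s0 z) t1) -
            Dq βinv s0 (Dq β s0 y) t1 * conj (z t1)) := by
      rw [ellBeta, ellBeta, eDb]
      simp only [map_add, map_mul, map_neg, map_sub, map_div₀, Complex.conj_ofReal]
      push_cast
      field_simp
      ring
    rw [key]
    rw [norm_mul]
    have e1 : ‖(t0 : ℂ) - (t1 : ℂ)‖ = |t0 - t1| := by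
      rw [← Complex.ofReal_sub, Complex.norm_real, Real.norm_eq_abs]
    rw [e1, mul_comm]
    have e2 : ‖y t1 * conj (Dq βinv s0 (Dq β s0 z) t1) -
        Dq βinv s0 (Dq β s0 y) t1 * conj (z t1)‖ ≤ Cy * C2 + C1 * Cz := by
      refine (norm_sub_le _ _).trans ?_
      rw [norm_mul, norm_mul, hnormconj, hnormconj]
      have := hCy (k + 1); have := hCz (k + 1); have := hC1 (k + 1); have := hC2 (k + 1)
      gcongr <;> first | exact hCy (k + 1) | exact hCz (k + 1) | exact hC1 (k + 1) | exact hC2 (k + 1)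
    exact mul_le_mul_of_nonneg_right e2 (abs_nonneg _)
  -- summability
  have hg : Summable (fun k : ℕ => ((β^[k] x - β^[k + 1] x : ℝ) : ℂ) *
      (ellBeta β βinv s0 r y (β^[k] x) * conj (z (β^[k] x)) -
        y (β^[k] x) * conj (ellBeta β βinv s0 r z (β^[k] x)))) := by
    rw [← summable_nat_add_iff 1]
    refine Summable.of_norm_bounded
      (g := fun k => (Cy * C2 + C1 * Cz) * |β^[k] x - β^[k + 1] x|)
      (hsum.mul_left _) ?_
    intro k
    exact hM k
  -- limit of the wronskian along the orbit
  have hWrec : ∀ N : ℕ, W (β^[N + 1] x) =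
      y (β^[N + 1] x) * conj (Dq β s0 z (β^[N] x)) -
        conj (z (β^[N + 1] x)) * Dq β s0 y (β^[N] x) := by
    intro N
    set t0 := β^[N] x with ht0d
    set t1 := β^[N + 1] x with ht1d
    have ht0I : t0 ∈ I := horb N
    have hbt : β t0 = t1 := (Function.iterate_succ_apply' β N x).symm
    have ht0s : t0 ≠ s0 := hne N
    have ht1s : t1 ≠ s0 := hne (N + 1)
    obtain ⟨_, _, _, _, hβt0⟩ := hpt t0 ht0I ht0s
    have hinvt1 : βinv t1 = t0 := by rw [← hbt, hli t0 ht0I]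
    have h10 : t1 ≠ t0 := by rw [← hbt]; exact hβt0
    have hne10 : (t1 : ℂ) ≠ (t0 : ℂ) := by exact_mod_cast h10
    have c10 : (t1 : ℂ) - t0 ≠ 0 := sub_ne_zero.mpr hne10
    have c01 : (t0 : ℂ) - t1 ≠ 0 := sub_ne_zero.mpr hne10.symm
    rw [hW, wronk, hDqe βinv _ t1 ht1s, hDqe βinv y t1 ht1s, hinvt1,
      hDqe β z t0 ht0s, hDqe β y t0 ht0s, hbt]
    simp only [map_div₀, map_sub, Complex.conj_ofReal]
    field_simp
    ring
  have hWlim : Tendsto (fun N : ℕ => W (β^[N] x)) atTop (𝓝 (W s0)) := by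
    rw [← tendsto_add_atTop_iff_nat 1]
    have e2 : Tendsto (fun N : ℕ => β^[N + 1] x) atTop (𝓝 s0) :=
      htend.comp (tendsto_add_atTop_nat 1)
    have hy1 : Tendsto (fun N : ℕ => y (β^[N + 1] x)) atTop (𝓝 (y s0)) :=
      hyc.tendsto.comp e2
    have hz1 : Tendsto (fun N : ℕ => conj (z (β^[N + 1] x))) atTop (𝓝 (conj (z s0))) :=
      (Complex.continuous_conj.tendsto _).comp (hzc.tendsto.comp e2)
    have hDy1 : Tendsto (fun N : ℕ => Dq β s0 y (β^[N] x)) atTop (𝓝 (Dq β s0 y s0)) :=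
      hDyc.tendsto.comp htend
    have hDz1 : Tendsto (fun N : ℕ => conj (Dq β s0 z (β^[N] x))) atTop
        (𝓝 (conj (Dq β s0 z s0))) :=
      (Complex.continuous_conj.tendsto _).comp (hDzc.tendsto.comp htend)
    have hcomb := (hy1.mul hDz1).sub (hz1.mul hDy1)
    have hW0 : W s0 = y s0 * conj (Dq β s0 z s0) - conj (z s0) * Dq β s0 y s0 := by
      rw [hW, wronk]
      have e3 : Dq βinv s0 (fun t => conj (z t)) s0 = conj (Dq β s0 z s0) := by
        simp only [Dq, if_pos rfl]
        exact hderivz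
      have e4 : Dq βinv s0 y s0 = Dq β s0 y s0 := by simp [Dq]
      rw [e3, e4]
    rw [hW0]
    exact hcomb.congr (fun N => (hWrec N).symm)
  -- partial sums and conclusion
  have hps : ∀ N : ℕ, ∑ k ∈ Finset.range N,
      ((β^[k] x - β^[k + 1] x : ℝ) : ℂ) *
        (ellBeta β βinv s0 r y (β^[k] x) * conj (z (β^[k] x)) -
          y (β^[k] x) * conj (ellBeta β βinv s0 r z (β^[k] x))) =
      W x - W (β^[N] x) := by
    intro N
    rw [Finset.sum_congr rfl (fun k _ => hterm k)]
    exact Finset.sum_range_sub' (fun k => W (β^[k] x)) N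
  have h1 := hg.hasSum.tendsto_sum_nat
  have h2 : Tendsto (fun N : ℕ => W x - W (β^[N] x)) atTop (𝓝 (W x - W s0)) :=
    tendsto_const_nhds.sub hWlim
  have hfin : (∑' k : ℕ, ((β^[k] x - β^[k + 1] x : ℝ) : ℂ) *
      (ellBeta β βinv s0 r y (β^[k] x) * conj (z (β^[k] x)) -
        y (β^[k] x) * conj (ellBeta β βinv s0 r z (β^[k] x)))) = W x - W s0 :=
    tendsto_nhds_unique (h1.congr (fun N => hps N)) h2
  rw [betaInt]
  exact hfin

end LagrangeAux

theorem stmt_10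
    (I : Set ℝ) (hIconn : I.OrdConnected)
    (β βinv : ℝ → ℝ) (s0 : ℝ)
    (hmono : StrictMonoOn β I) (hcont : ContinuousOn β I)
    (hbij : Set.BijOn β I I) (hinv : Set.InvOn βinv β I I)
    (hs0I : s0 ∈ I) (hfix : β s0 = s0)
    (hsign : ∀ t ∈ I, (t - s0) * (β t - t) ≤ 0)
    (huniq : ∀ t ∈ I, (t - s0) * (β t - t) = 0 → t = s0)
    (a b : ℝ) (ha : a ∈ I) (hb : b ∈ I) (has0 : a ≤ s0) (hs0b : s0 ≤ b)
    (r : ℝ → ℝ) (hr : ContinuousOn r (Set.Icc a b)) (y z : ℝ → ℂ)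
    (hyL2a : Summable fun j : ℕ => (β^[j] a - β^[j + 1] a) * ‖y (β^[j] a)‖ ^ 2)
    (hyL2b : Summable fun j : ℕ => (β^[j] b - β^[j + 1] b) * ‖y (β^[j] b)‖ ^ 2)
    (hzL2a : Summable fun j : ℕ => (β^[j] a - β^[j + 1] a) * ‖z (β^[j] a)‖ ^ 2)
    (hzL2b : Summable fun j : ℕ => (β^[j] b - β^[j + 1] b) * ‖z (β^[j] b)‖ ^ 2)
    (hyc : ContinuousAt y s0) (hzc : ContinuousAt z s0)
    (hyd : DifferentiableAt ℝ y s0) (hzd : DifferentiableAt ℝ z s0)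
    (hDyd : DifferentiableAt ℝ (Dq β s0 y) s0) (hDzd : DifferentiableAt ℝ (Dq β s0 z) s0)
    (hDyb : ∃ C, ∀ t ∈ insert s0 (Set.range (fun j : ℕ => β^[j] a) ∪ Set.range (fun j : ℕ => β^[j] b)), ‖Dq β s0 y t‖ ≤ C)
    (hDzb : ∃ C, ∀ t ∈ insert s0 (Set.range (fun j : ℕ => β^[j] a) ∪ Set.range (fun j : ℕ => β^[j] b)), ‖Dq β s0 z t‖ ≤ C)
    (hDDyb : ∃ C, ∀ t ∈ insert s0 (Set.range (fun j : ℕ => β^[j] a) ∪ Set.range (fun j : ℕ => β^[j] b)), ‖Dq βinv s0 (Dq β s0 y) t‖ ≤ C)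
    (hDDzb : ∃ C, ∀ t ∈ insert s0 (Set.range (fun j : ℕ => β^[j] a) ∪ Set.range (fun j : ℕ => β^[j] b)), ‖Dq βinv s0 (Dq β s0 z) t‖ ≤ C) :
    betaIntAB β a b (fun t =>
        ellBeta β βinv s0 r y t * conj (z t) - y t * conj (ellBeta β βinv s0 r z t)) =
      wronk βinv s0 y (fun t => conj (z t)) b - wronk βinv s0 y (fun t => conj (z t)) a := by
  obtain ⟨horbb, htendb, hsumb⟩ := lagrange_orbit_upper I hIconn β s0 hmono hcont hs0I hfix
    hsign huniq b hb hs0b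
  obtain ⟨horba, htenda, hsuma⟩ := lagrange_orbit_lower I hIconn β s0 hmono hcont hs0I hfix
    hsign huniq a ha has0
  have hderivz : deriv (fun t => (conj (z t) : ℂ)) s0 = conj (deriv z s0) := by
    have h2 : HasDerivAt (fun t => star (z t)) (star (deriv z s0)) s0 := hzd.hasDerivAt.star
    simp only [starRingEnd_apply]
    exact h2.deriv
  obtain ⟨C1, hC1⟩ := hDDyb
  obtain ⟨C2, hC2⟩ := hDDzb
  have hC1a : ∀ k : ℕ, ‖Dq βinv s0 (Dq β s0 y) (β^[k] a)‖ ≤ C1 := fun k =>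
    hC1 _ (Set.mem_insert_iff.mpr (Or.inr (Set.mem_union_left _ ⟨k, rfl⟩)))
  have hC1b : ∀ k : ℕ, ‖Dq βinv s0 (Dq β s0 y) (β^[k] b)‖ ≤ C1 := fun k =>
    hC1 _ (Set.mem_insert_iff.mpr (Or.inr (Set.mem_union_right _ ⟨k, rfl⟩)))
  have hC2a : ∀ k : ℕ, ‖Dq βinv s0 (Dq β s0 z) (β^[k] a)‖ ≤ C2 := fun k =>
    hC2 _ (Set.mem_insert_iff.mpr (Or.inr (Set.mem_union_left _ ⟨k, rfl⟩)))
  have hC2b : ∀ k : ℕ, ‖Dq βinv s0 (Dq β s0 z) (β^[k] b)‖ ≤ C2 := fun k =>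
    hC2 _ (Set.mem_insert_iff.mpr (Or.inr (Set.mem_union_right _ ⟨k, rfl⟩)))
  have hbddya := ((hyc.tendsto.comp htenda).norm).bddAbove_range
  obtain ⟨Cya, hCya'⟩ := hbddya
  have hCya : ∀ k : ℕ, ‖y (β^[k] a)‖ ≤ Cya := fun k => hCya' ⟨k, rfl⟩
  have hbddyb := ((hyc.tendsto.comp htendb).norm).bddAbove_range
  obtain ⟨Cyb, hCyb'⟩ := hbddyb
  have hCyb : ∀ k : ℕ, ‖y (β^[k] b)‖ ≤ Cyb := fun k => hCyb' ⟨k, rfl⟩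
  have hbddza := ((hzc.tendsto.comp htenda).norm).bddAbove_range
  obtain ⟨Cza, hCza'⟩ := hbddza
  have hCza : ∀ k : ℕ, ‖z (β^[k] a)‖ ≤ Cza := fun k => hCza' ⟨k, rfl⟩
  have hbddzb := ((hzc.tendsto.comp htendb).norm).bddAbove_range
  obtain ⟨Czb, hCzb'⟩ := hbddzb
  have hCzb : ∀ k : ℕ, ‖z (β^[k] b)‖ ≤ Czb := fun k => hCzb' ⟨k, rfl⟩
  have hcoreb := lagrange_core I β βinv s0 hbij hinv hs0I hfix huniq r y z hyc hzc
    hDyd.continuousAt hDzd.continuousAt hderivz b horbb htendb hsumb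
    C1 C2 Cyb Czb hC1b hC2b hCyb hCzb
  have hcorea := lagrange_core I β βinv s0 hbij hinv hs0I hfix huniq r y z hyc hzc
    hDyd.continuousAt hDzd.continuousAt hderivz a horba htenda hsuma
    C1 C2 Cya Cza hC1a hC2a hCya hCza
  rw [betaIntAB, hcoreb, hcorea]
  ring
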